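/- Let p be a prime, let m be an integer coprime to p, and let s ≥ 1 be an integer. The group G_s(1,m) = ⟨a, b; b⁻¹ab = aᵐ, a^{p^s} = 1⟩ is residually a finite p-group if and only if m ≡ 1 (mod p). -/

import Mathlib

/-- A group `X` is *residually a finite p-group* if every non-identity element is excluded
by some normal subgroup of `p`-power index. -/
def ResiduallyPGroup (p : ℕ) (X : Type*) [Group X] : Prop :=
  ∀ x : X, x ≠ 1 → ∃ N : Subgroup X, N.Normal ∧ x ∉ N ∧ ∃ k : ℕ, N.index = p ^ k

/-- The relators `b⁻¹ab·a⁻ᵐ` and `a^{pˢ}` of the group `G_s(1,m)`,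
with `a = FreeGroup.of 0` and `b = FreeGroup.of 1`. -/
def bsTorsionRels (m : ℤ) (q : ℕ) : Set (FreeGroup (Fin 2)) :=
  {(FreeGroup.of 1)⁻¹ * FreeGroup.of 0 * FreeGroup.of 1 * ((FreeGroup.of 0) ^ m)⁻¹,
   (FreeGroup.of 0) ^ q}

/-- The group `G_s(1,m) = ⟨a, b; b⁻¹ab = aᵐ, a^{q} = 1⟩` (with `q = pˢ`). -/
def BSTorsion (m : ℤ) (q : ℕ) : Type := PresentedGroup (bsTorsionRels m q)

instance (m : ℤ) (q : ℕ) : Group (BSTorsion m q) := by delta BSTorsion; infer_instance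

namespace BSAux

open Multiplicative SemidirectProduct

variable {G : Type*} [Group G]

theorem zpow_eq_one_of_zmod {q : ℕ} {a : G} (ha : a ^ q = 1) {z : ℤ}
    (h : (z : ZMod q) = 0) : a ^ z = 1 := by
  obtain ⟨t, rfl⟩ := (ZMod.intCast_zmod_eq_zero_iff_dvd z q).mp h
  rw [zpow_mul, zpow_natCast, ha, one_zpow]

theorem zpow_eq_zpow_of_zmod {q : ℕ} {a : G} (ha : a ^ q = 1) {y z : ℤ}
    (h : (y : ZMod q) = (z : ZMod q)) : a ^ y = a ^ z := by
  have h2 : a ^ (y - z) = 1 := zpow_eq_one_of_zmod ha (by push_cast; rw [h]; ring)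
  calc a ^ y = a ^ (y - z) * a ^ z := by rw [← zpow_add]; ring_nf
    _ = a ^ z := by rw [h2, one_mul]

noncomputable def powZMod {q : ℕ} (a : G) (ha : a ^ q = 1) :
    Multiplicative (ZMod q) →* G where
  toFun x := (ZMod.lift q ⟨zmultiplesHom (Additive G) (Additive.ofMul a), by
      rw [zmultiplesHom_apply, ← ofMul_zpow, zpow_natCast, ha, ofMul_one]⟩ x.toAdd).toMul
  map_one' := by simp
  map_mul' x y := by simp [toAdd_mul]

@[simp] theorem powZMod_intCast {q : ℕ} (a : G) (ha : a ^ q = 1) (z : ℤ) :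
    powZMod a ha (ofAdd ((z : ZMod q))) = a ^ z := by
  simp [powZMod, ZMod.lift_coe, zmultiplesHom_apply]

theorem powZMod_ofAdd_one {q : ℕ} (a : G) (ha : a ^ q = 1) :
    powZMod a ha (ofAdd 1) = a := by
  have := powZMod_intCast a ha 1
  simpa using this

theorem mext {q : ℕ} {f g : Multiplicative (ZMod q) →* G}
    (h : f (ofAdd 1) = g (ofAdd 1)) : f = g := by
  refine MonoidHom.ext (fun x => ?_)
  obtain ⟨z, hz⟩ := ZMod.intCast_surjective (Multiplicative.toAdd x)
  have hx : x = (ofAdd (1 : ZMod q)) ^ z := by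
    rw [← ofAdd_zsmul, zsmul_eq_mul, mul_one, hz, ofAdd_toAdd]
  rw [hx, map_zpow, map_zpow, h]

def theta (q : ℕ) : (ZMod q)ˣ →* MulAut (Multiplicative (ZMod q)) where
  toFun v :=
    { toFun := fun x => ofAdd ((v : ZMod q) * x.toAdd)
      invFun := fun x => ofAdd (((v⁻¹ : (ZMod q)ˣ) : ZMod q) * x.toAdd)
      left_inv := fun x => by simp [← mul_assoc, ← Units.val_mul]
      right_inv := fun x => by simp [← mul_assoc, ← Units.val_mul]
      map_mul' := fun x y => by simp [mul_add, ofAdd_add] }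
  map_one' := by ext x; simp
  map_mul' v w := by ext x; simp [Units.val_mul, mul_assoc]

@[simp] theorem theta_apply (q : ℕ) (v : (ZMod q)ˣ) (x : Multiplicative (ZMod q)) :
    theta q v x = ofAdd ((v : ZMod q) * x.toAdd) := rfl

def psi (q : ℕ) (u : (ZMod q)ˣ) : Multiplicative ℤ →* MulAut (Multiplicative (ZMod q)) :=
  (theta q).comp (zpowersHom _ u⁻¹)

@[simp] theorem psi_apply (q : ℕ) (u : (ZMod q)ˣ) (g : Multiplicative ℤ)
    (x : Multiplicative (ZMod q)) :
    psi q u g x = ofAdd (((u⁻¹ ^ g.toAdd : (ZMod q)ˣ) : ZMod q) * x.toAdd) := rfl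

section Presented

variable (m : ℤ) (q : ℕ)

def aa : PresentedGroup (bsTorsionRels m q) := .of 0
def bb : PresentedGroup (bsTorsionRels m q) := .of 1

variable {m q}

theorem relA : (aa m q) ^ q = 1 := by
  have hmem : (FreeGroup.of 0) ^ q ∈ bsTorsionRels m q := by simp [bsTorsionRels]
  have h : PresentedGroup.mk (bsTorsionRels m q) ((FreeGroup.of 0) ^ q) = 1 :=
    (QuotientGroup.eq_one_iff _).mpr (Subgroup.subset_normalClosure hmem)
  rw [map_pow] at h
  exact h

theorem relB : (bb m q)⁻¹ * aa m q * bb m q = (aa m q) ^ m := by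
  have hmem : (FreeGroup.of 1)⁻¹ * FreeGroup.of 0 * FreeGroup.of 1 *
      ((FreeGroup.of 0) ^ m)⁻¹ ∈ bsTorsionRels m q := by simp [bsTorsionRels]
  have h : PresentedGroup.mk (bsTorsionRels m q) ((FreeGroup.of 1)⁻¹ * FreeGroup.of 0 *
      FreeGroup.of 1 * ((FreeGroup.of 0) ^ m)⁻¹) = 1 :=
    (QuotientGroup.eq_one_iff _).mpr (Subgroup.subset_normalClosure hmem)
  rw [map_mul, map_mul, map_mul, map_inv, map_inv, map_zpow] at h
  exact mul_inv_eq_one.mp h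

variable (u : (ZMod q)ˣ) (hu : (u : ZMod q) = (m : ZMod q))

/-- The images of the generators in the semidirect product. -/
def genImg : Fin 2 → (Multiplicative (ZMod q) ⋊[psi q u] Multiplicative ℤ) :=
  ![inl (ofAdd 1), inr (ofAdd 1)]

include hu in
theorem relators_mapped : ∀ r ∈ bsTorsionRels m q,
    FreeGroup.lift (genImg u) r = 1 := by
  intro r hr
  have h0 : FreeGroup.lift (genImg u) (FreeGroup.of 0) = inl (ofAdd 1) := by
    simp [genImg]
  have h1 : FreeGroup.lift (genImg u) (FreeGroup.of 1) = inr (ofAdd 1) := by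
    simp [genImg]
  simp only [bsTorsionRels, Set.mem_insert_iff, Set.mem_singleton_iff] at hr
  rcases hr with rfl | rfl
  · rw [map_mul, map_mul, map_mul, map_inv, map_inv, map_zpow, h0, h1]
    have e1 : (inr (ofAdd (1:ℤ)) : Multiplicative (ZMod q) ⋊[psi q u] Multiplicative ℤ)⁻¹ *
        inl (ofAdd 1) * inr (ofAdd 1) = inl ((psi q u (ofAdd (1:ℤ))⁻¹) (ofAdd 1)) := by
      rw [inl_aut]
      simp [← map_inv]
    have e2 : (psi q u (ofAdd (1:ℤ))⁻¹) (ofAdd (1 : ZMod q)) = ofAdd ((m : ZMod q)) := by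
      rw [← ofAdd_neg, psi_apply]
      simp [hu]
    have e3 : (inl (ofAdd (1 : ZMod q)) : Multiplicative (ZMod q) ⋊[psi q u]
        Multiplicative ℤ) ^ m = inl (ofAdd ((m : ZMod q))) := by
      rw [← map_zpow, ← ofAdd_zsmul, zsmul_eq_mul, mul_one]
    rw [e3, e1, e2, mul_inv_cancel]
  · rw [map_pow, h0, ← map_pow, ← ofAdd_nsmul, nsmul_eq_mul, mul_one, ZMod.natCast_self,
      ofAdd_zero, map_one]

/-- The homomorphism from the presented group to the semidirect product. -/
noncomputable def phi : PresentedGroup (bsTorsionRels m q) →*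
    (Multiplicative (ZMod q) ⋊[psi q u] Multiplicative ℤ) :=
  PresentedGroup.toGroup (relators_mapped u hu)

@[simp] theorem phi_aa : phi u hu (aa m q) = inl (ofAdd 1) := by
  rw [aa, phi, PresentedGroup.toGroup.of]; simp [genImg]

@[simp] theorem phi_bb : phi u hu (bb m q) = inr (ofAdd 1) := by
  rw [bb, phi, PresentedGroup.toGroup.of]; simp [genImg]

end Presented

end BSAux

namespace BSAux
open Multiplicative SemidirectProduct
set_option linter.unusedSectionVars false

section Beta

variable {m : ℤ} {q : ℕ} [NeZero q] (u : (ZMod q)ˣ) (hu : (u : ZMod q) = (m : ZMod q))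

/-- The power map sending `ofAdd 1` to the generator `a`. -/
noncomputable def fA : Multiplicative (ZMod q) →* PresentedGroup (bsTorsionRels m q) :=
  powZMod (aa m q) relA

theorem fA_ofAdd_one : (fA : Multiplicative (ZMod q) →* _) (ofAdd 1) = aa m q :=
  powZMod_ofAdd_one _ _

include hu in
theorem conj_binv (x : Multiplicative (ZMod q)) :
    (bb m q)⁻¹ * fA x * bb m q = fA (theta q u x) := by
  have key : ((MulAut.conj (bb m q)⁻¹).toMonoidHom.comp
      (fA : Multiplicative (ZMod q) →* _)) =
      (fA : Multiplicative (ZMod q) →* _).comp (theta q u).toMonoidHom := by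
    apply mext
    simp only [MonoidHom.comp_apply, MulEquiv.coe_toMonoidHom, MulAut.conj_apply,
      theta_apply, toAdd_ofAdd, mul_one, inv_inv]
    rw [fA_ofAdd_one, relB, hu, ← powZMod_intCast (aa m q) relA m]
    rfl
  have := DFunLike.congr_fun key x
  simpa [MulAut.conj_apply] using this

include hu in
theorem conj_b (x : Multiplicative (ZMod q)) :
    bb m q * fA x * (bb m q)⁻¹ = fA (theta q u⁻¹ x) := by
  have key : ((MulAut.conj (bb m q)).toMonoidHom.comp
      (fA : Multiplicative (ZMod q) →* _)) =
      (fA : Multiplicative (ZMod q) →* _).comp (theta q u⁻¹).toMonoidHom := by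
    apply mext
    simp only [MonoidHom.comp_apply, MulEquiv.coe_toMonoidHom, MulAut.conj_apply,
      theta_apply, toAdd_ofAdd, mul_one]
    rw [fA_ofAdd_one]
    -- goal : bb * aa * bb⁻¹ = fA (ofAdd ↑u⁻¹)
    set k : ℤ := ((((u⁻¹ : (ZMod q)ˣ) : ZMod q)).val : ℤ) with hk
    have hkc : ((k : ℤ) : ZMod q) = ((u⁻¹ : (ZMod q)ˣ) : ZMod q) := by
      rw [hk]
      push_cast
      rw [ZMod.natCast_val, ZMod.cast_id]
    have hfk : (fA : Multiplicative (ZMod q) →* _) (ofAdd ((u⁻¹ : (ZMod q)ˣ) : ZMod q)) =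
        (aa m q) ^ k := by
      rw [← hkc, fA, powZMod_intCast]
    rw [hfk]
    have h1 : (bb m q)⁻¹ * ((aa m q) ^ k) * bb m q = aa m q := by
      have hconj : (bb m q)⁻¹ * ((aa m q) ^ k) * bb m q =
          ((bb m q)⁻¹ * aa m q * bb m q) ^ k := by
        have := conj_zpow (i := k) (a := (bb m q)⁻¹) (b := aa m q)
        rw [inv_inv] at this
        rw [this]
      rw [hconj, relB, ← zpow_mul]
      have : ((m * k : ℤ) : ZMod q) = ((1 : ℤ) : ZMod q) := by
        push_cast
        rw [hkc, ← hu]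
        simp [← Units.val_mul]
      rw [zpow_eq_zpow_of_zmod relA this, zpow_one]
    calc bb m q * aa m q * (bb m q)⁻¹
        = bb m q * ((bb m q)⁻¹ * ((aa m q) ^ k) * bb m q) * (bb m q)⁻¹ := by rw [h1]
      _ = (aa m q) ^ k := by group
  have := DFunLike.congr_fun key x
  simpa [MulAut.conj_apply] using this

include hu in
theorem conj_z : ∀ (z : ℤ) (x : Multiplicative (ZMod q)),
    (bb m q) ^ z * fA x * ((bb m q) ^ z)⁻¹ = fA (theta q (u⁻¹ ^ z) x) := by
  intro z
  induction z using Int.induction_on with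
  | zero => intro x; simp
  | succ n ih =>
    intro x
    have hb : (bb m q) ^ ((n : ℤ) + 1) = (bb m q) ^ (n : ℤ) * bb m q := by
      rw [zpow_add_one]
    rw [hb, mul_inv_rev]
    calc (bb m q) ^ (n : ℤ) * bb m q * fA x * ((bb m q)⁻¹ * ((bb m q) ^ (n : ℤ))⁻¹)
        = (bb m q) ^ (n : ℤ) * (bb m q * fA x * (bb m q)⁻¹) * ((bb m q) ^ (n : ℤ))⁻¹ := by
          group
      _ = (bb m q) ^ (n : ℤ) * fA (theta q u⁻¹ x) * ((bb m q) ^ (n : ℤ))⁻¹ := by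
          rw [conj_b u hu]
      _ = fA (theta q (u⁻¹ ^ (n : ℤ)) (theta q u⁻¹ x)) := ih _
      _ = fA (theta q (u⁻¹ ^ ((n : ℤ) + 1)) x) := by
          rw [zpow_add_one, map_mul]
          rfl
  | pred n ih =>
    intro x
    have hb : (bb m q) ^ (-(n : ℤ) - 1) = (bb m q) ^ (-(n : ℤ)) * (bb m q)⁻¹ := by
      rw [zpow_sub_one]
    rw [hb, mul_inv_rev, inv_inv]
    calc (bb m q) ^ (-(n : ℤ)) * (bb m q)⁻¹ * fA x * (bb m q * ((bb m q) ^ (-(n : ℤ)))⁻¹)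
        = (bb m q) ^ (-(n : ℤ)) * ((bb m q)⁻¹ * fA x * bb m q) * ((bb m q) ^ (-(n : ℤ)))⁻¹ := by
          group
      _ = (bb m q) ^ (-(n : ℤ)) * fA (theta q u x) * ((bb m q) ^ (-(n : ℤ)))⁻¹ := by
          rw [conj_binv u hu]
      _ = fA (theta q (u⁻¹ ^ (-(n : ℤ))) (theta q u x)) := ih _
      _ = fA (theta q (u⁻¹ ^ (-(n : ℤ) - 1)) x) := by
          rw [zpow_sub_one, map_mul, inv_inv]
          rfl

end Beta
end BSAux

namespace BSAux
open Multiplicative SemidirectProduct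
set_option linter.unusedSectionVars false

section Inj

variable {m : ℤ} {q : ℕ} [NeZero q] (u : (ZMod q)ˣ) (hu : (u : ZMod q) = (m : ZMod q))

include hu in
/-- The homomorphism from the semidirect product back to the presented group. -/
noncomputable def beta : (Multiplicative (ZMod q) ⋊[psi q u] Multiplicative ℤ) →*
    PresentedGroup (bsTorsionRels m q) :=
  SemidirectProduct.lift fA (zpowersHom _ (bb m q)) (by
    intro g
    ext x
    simp only [MonoidHom.comp_apply, MulEquiv.coe_toMonoidHom, MulAut.conj_apply,
      zpowersHom_apply]
    exact (conj_z u hu (Multiplicative.toAdd g) x).symm)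

theorem beta_phi : ∀ x : PresentedGroup (bsTorsionRels m q), beta u hu (phi u hu x) = x := by
  have key : (beta u hu).comp (phi u hu) = MonoidHom.id _ := by
    apply PresentedGroup.ext
    intro i
    fin_cases i
    · show beta u hu (phi u hu (aa m q)) = aa m q
      rw [phi_aa, beta, SemidirectProduct.lift_inl, fA_ofAdd_one]
    · show beta u hu (phi u hu (bb m q)) = bb m q
      rw [phi_bb, beta, SemidirectProduct.lift_inr, zpowersHom_apply]
      simp
  intro x
  exact DFunLike.congr_fun key x

theorem phi_injective : Function.Injective (phi u hu) :=
  Function.LeftInverse.injective (beta_phi u hu)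

end Inj
end BSAux

namespace BSAux
theorem key_dvd {p : ℕ} {m : ℤ} (h : (p:ℤ) ∣ m - 1) :
    ∀ j : ℕ, ((p:ℤ)) ^ (j+1) ∣ m ^ (p ^ j) - 1 := by
  intro j
  induction j with
  | zero => simpa using h
  | succ n ih =>
    have hgeom : (∑ i ∈ Finset.range p, (m ^ (p ^ n)) ^ i) * (m ^ (p ^ n) - 1)
        = (m ^ (p ^ n)) ^ p - 1 := geom_sum_mul _ _
    have hpd : (p:ℤ) ∣ m ^ (p ^ n) - 1 :=
      dvd_trans (dvd_pow_self (p:ℤ) (Nat.succ_ne_zero n)) ih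
    have hm1 : ((m : ZMod p)) ^ (p ^ n) = 1 := by
      have := (ZMod.intCast_zmod_eq_zero_iff_dvd _ p).mpr hpd
      push_cast at this
      exact sub_eq_zero.mp this
    have hsum : (p : ℤ) ∣ ∑ i ∈ Finset.range p, (m ^ (p ^ n)) ^ i := by
      have hcast : ((∑ i ∈ Finset.range p, (m ^ (p ^ n)) ^ i : ℤ) : ZMod p) = 0 := by
        push_cast
        rw [hm1]
        simp
      exact (ZMod.intCast_zmod_eq_zero_iff_dvd _ p).mp hcast
    have hfinal : m ^ (p ^ (n+1)) - 1 =
        (∑ i ∈ Finset.range p, (m ^ (p ^ n)) ^ i) * (m ^ (p ^ n) - 1) := by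
      rw [hgeom, ← pow_mul, ← pow_succ]
    have hpow : (p:ℤ) ^ (n+1+1) = (p:ℤ) * (p:ℤ)^(n+1) := by ring
    rw [hfinal, hpow]
    exact mul_dvd_mul hsum ih

end BSAux

open Multiplicative SemidirectProduct BSAux in
/-- Let `m` be coprime to the prime `p` and `s ≥ 1`. The group
`G_s(1,m) = ⟨a, b; b⁻¹ab = aᵐ, a^{pˢ} = 1⟩` is residually a finite `p`-group iff
`m ≡ 1 (mod p)`. -/
theorem bsTorsion_residually_p_iff (p : ℕ) (hp : p.Prime) (m : ℤ)
    (hm : IsCoprime m (p : ℤ)) (s : ℕ) (hs : 1 ≤ s) :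
    ResiduallyPGroup p (BSTorsion m (p ^ s)) ↔ m ≡ 1 [ZMOD (p : ℤ)] := by
  have hIff : ResiduallyPGroup p (BSTorsion m (p ^ s)) ↔
      ResiduallyPGroup p (PresentedGroup (bsTorsionRels m (p ^ s))) := Iff.rfl
  rw [hIff]
  set q := p ^ s with hqdef
  haveI : NeZero q := ⟨pow_ne_zero s hp.pos.ne'⟩
  haveI : Fact p.Prime := ⟨hp⟩
  -- the unit `u` with value `m` in `ZMod q`
  obtain ⟨x, y, hxy⟩ := hm.pow_right (n := s)
  have hps0 : (((p:ℤ) ^ s : ℤ) : ZMod q) = 0 := by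
    have h1 : ((q : ℕ) : ZMod q) = 0 := ZMod.natCast_self q
    rw [hqdef] at h1
    push_cast at h1 ⊢
    exact h1
  have hunit : IsUnit ((m : ℤ) : ZMod q) := by
    apply IsUnit.of_mul_eq_one ((x : ℤ) : ZMod q)
    have := congrArg (fun t : ℤ => ((t : ℤ) : ZMod q)) hxy
    push_cast at this hps0
    rw [hps0, mul_zero, add_zero] at this
    rw [mul_comm]
    exact this
  set u : (ZMod q)ˣ := hunit.unit with hudef
  have hu : (u : ZMod q) = ((m : ℤ) : ZMod q) := hunit.unit_spec
  constructor
  · -- residually p → m ≡ 1 mod p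
    intro R
    have hps1 : ((p ^ (s-1) : ℕ) : ZMod q) ≠ 0 := by
      rw [Ne, ZMod.natCast_eq_zero_iff]
      intro hdvd
      have hle : q ≤ p ^ (s-1) := Nat.le_of_dvd (Nat.pow_pos hp.pos) hdvd
      have hlt : p ^ (s-1) < p ^ s := Nat.pow_lt_pow_right hp.one_lt (by omega)
      omega
    have hx1 : (aa m q) ^ (p ^ (s-1)) ≠ 1 := by
      intro hcon
      apply hps1
      have h : (phi u hu) ((aa m q) ^ (p ^ (s-1))) = 1 := by rw [hcon, map_one]
      rw [map_pow, phi_aa, ← map_pow, ← ofAdd_nsmul, nsmul_eq_mul, mul_one] at h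
      have h2 : ofAdd (((p ^ (s-1) : ℕ) : ZMod q)) = (1 : Multiplicative (ZMod q)) := by
        apply inl_injective (φ := psi q u)
        rw [h, map_one]
      simpa using h2
    obtain ⟨N, hN, hxN, k, hk⟩ := R _ hx1
    haveI := hN
    have hcard : Nat.card (PresentedGroup (bsTorsionRels m q) ⧸ N) = p ^ k := hk
    haveI : Finite (PresentedGroup (bsTorsionRels m q) ⧸ N) :=
      Nat.finite_of_card_ne_zero (by rw [hcard]; exact pow_ne_zero _ hp.pos.ne')
    set π := QuotientGroup.mk' N with hπ
    set A := π (aa m q) with hA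
    set B := π (bb m q) with hB
    have h1 : A ^ q = 1 := by rw [hA, ← map_pow, relA, map_one]
    have h2 : B⁻¹ * A * B = A ^ (m : ℤ) := by
      rw [hA, hB, ← map_zpow, ← map_inv, ← map_mul, ← map_mul, relB]
    have h3 : A ^ (p ^ (s-1)) ≠ 1 := by
      rw [hA, ← map_pow]
      intro hcon
      exact hxN ((QuotientGroup.eq_one_iff _).mp hcon)
    have claim : ∀ c : ℕ, (B ^ c)⁻¹ * A * B ^ c = A ^ ((m : ℤ) ^ c) := by
      intro c
      induction c with
      | zero => simp
      | succ n ih =>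
        rw [pow_succ, mul_inv_rev]
        calc B⁻¹ * (B ^ n)⁻¹ * A * (B ^ n * B)
            = B⁻¹ * ((B ^ n)⁻¹ * A * B ^ n) * B := by group
          _ = B⁻¹ * A ^ ((m:ℤ) ^ n) * B := by rw [ih]
          _ = (B⁻¹ * A * B) ^ ((m:ℤ) ^ n) := by
              have hc := conj_zpow (i := (m:ℤ) ^ n) (a := B⁻¹) (b := A)
              rw [inv_inv] at hc
              rw [hc]
          _ = A ^ ((m:ℤ) ^ (n+1)) := by
              rw [h2, ← zpow_mul]
              congr 1
              rw [pow_succ]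
              ring
    have hBc : B ^ (p ^ k) = 1 := by rw [← hcard]; exact pow_card_eq_one'
    have hAeq : A = A ^ ((m:ℤ) ^ (p ^ k)) := by
      have := claim (p ^ k)
      rw [hBc] at this
      simpa using this
    have hAz : A ^ ((m:ℤ) ^ (p ^ k) - 1) = 1 := by
      rw [zpow_sub, ← hAeq, zpow_one, mul_inv_cancel]
    set t := orderOf A with ht
    have ht1 : t ∣ q := orderOf_dvd_of_pow_eq_one h1
    have htz : (t : ℤ) ∣ (m:ℤ) ^ (p ^ k) - 1 := orderOf_dvd_iff_zpow_eq_one.mpr hAz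
    have htne : t ≠ 1 := by
      intro hcon
      have : A = 1 := orderOf_eq_one_iff.mp hcon
      exact h3 (by rw [this, one_pow])
    obtain ⟨j, hjs, hj⟩ := (Nat.dvd_prime_pow hp).mp ht1
    have hpt : p ∣ t := by
      rcases Nat.eq_zero_or_pos j with rfl | hj0
      · simp at hj; exact absurd hj htne
      · rw [hj]; exact dvd_pow_self p hj0.ne'
    have hpdvd : (p : ℤ) ∣ (m:ℤ) ^ (p ^ k) - 1 :=
      dvd_trans (Int.natCast_dvd_natCast.mpr hpt) htz
    have hzm : ((m : ℤ) : ZMod p) ^ (p ^ k) = 1 := by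
      have := (ZMod.intCast_zmod_eq_zero_iff_dvd _ p).mpr hpdvd
      push_cast at this
      exact sub_eq_zero.mp this
    have frob : ∀ r : ℕ, ((m : ℤ) : ZMod p) ^ (p ^ r) = ((m : ℤ) : ZMod p) := by
      intro r
      induction r with
      | zero => simp
      | succ n ih => rw [pow_succ, pow_mul, ih, ZMod.pow_card]
    have hfin : ((m : ℤ) : ZMod p) = ((1 : ℤ) : ZMod p) := by
      rw [← frob k, hzm]; norm_num
    exact (ZMod.intCast_eq_intCast_iff _ _ _).mp hfin
  · -- m ≡ 1 mod p → residually p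
    intro hm1 w hw
    -- u ^ (p^(s-1)) = 1
    have hpm : (p : ℤ) ∣ m - 1 := by
      have := hm1.dvd
      simpa using (dvd_neg.mpr this)
    have hdq : ((p:ℤ)) ^ s ∣ m ^ (p ^ (s-1)) - 1 := by
      have := key_dvd hpm (s-1)
      rwa [Nat.sub_add_cancel hs] at this
    have hmq : ((m : ℤ) : ZMod q) ^ (p ^ (s-1)) = 1 := by
      have h0 : ((m ^ (p ^ (s-1)) - 1 : ℤ) : ZMod q) = 0 := by
        rw [ZMod.intCast_zmod_eq_zero_iff_dvd]
        have : ((q:ℕ) : ℤ) = (p:ℤ) ^ s := by push_cast [hqdef]; ring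
        rw [this]
        exact hdq
      push_cast at h0
      exact sub_eq_zero.mp h0
    have hu1 : u⁻¹ ^ (p ^ (s-1)) = 1 := by
      rw [inv_pow]
      apply inv_eq_one.mpr
      ext
      push_cast
      rw [hu, hmq]
    -- quotient target for the torsion part
    set pn := p ^ (s-1) with hpn
    let χ : Multiplicative (ZMod pn) →* (ZMod q)ˣ := powZMod u⁻¹ hu1
    let r : Multiplicative ℤ →* Multiplicative (ZMod pn) := zpowersHom _ (ofAdd (1 : ZMod pn))
    have hcompat : ∀ g : Multiplicative ℤ,
        (MonoidHom.id (Multiplicative (ZMod q))).comp ((psi q u) g).toMonoidHom =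
          (((theta q).comp χ) (r g)).toMonoidHom.comp (MonoidHom.id _) := by
      intro g
      refine MonoidHom.ext (fun xx => ?_)
      simp only [MonoidHom.comp_apply, MonoidHom.id_apply, MulEquiv.coe_toMonoidHom,
        psi_apply, MonoidHom.coe_comp, Function.comp_apply, theta_apply]
      congr 2
      have hr : r g = ofAdd (((Multiplicative.toAdd g : ℤ) : ZMod pn)) := by
        show (ofAdd (1 : ZMod pn)) ^ (Multiplicative.toAdd g) = _
        rw [← ofAdd_zsmul, zsmul_eq_mul, mul_one]
      rw [hr]
      show _ = ((powZMod u⁻¹ hu1) (ofAdd (((Multiplicative.toAdd g : ℤ) : ZMod pn))) : ZMod q)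
      rw [powZMod_intCast]
    let ρ := SemidirectProduct.map (MonoidHom.id (Multiplicative (ZMod q))) r hcompat
    by_cases hz : Multiplicative.toAdd ((phi u hu w).right) = 0
    · -- torsion case
      set σ := ρ.comp (phi u hu) with hσ
      refine ⟨σ.ker, MonoidHom.normal_ker σ, ?_, ?_⟩
      · rw [MonoidHom.mem_ker]
        intro hcon
        have hwr : (phi u hu w).right = 1 := by
          rw [← ofAdd_toAdd ((phi u hu w).right), hz, ofAdd_zero]
        have hdecomp : phi u hu w = inl ((phi u hu w).left) := by
          rw [← inl_left_mul_inr_right (phi u hu w), hwr, map_one, mul_one]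
          rw [← inl_left_mul_inr_right (phi u hu w), hwr]
          simp
        have hleft : (phi u hu w).left ≠ 1 := by
          intro hcon2
          apply hw
          apply phi_injective u hu
          rw [hdecomp, hcon2, map_one, map_one]
        apply hleft
        apply inl_injective (φ := (theta q).comp χ)
        have : σ w = inl ((phi u hu w).left) := by
          rw [hσ, MonoidHom.comp_apply, hdecomp, SemidirectProduct.map_inl]
          rfl
        rw [← this, hcon, map_one]
      · -- index is a p-power
        let e : (Multiplicative (ZMod q) ⋊[(theta q).comp χ] Multiplicative (ZMod pn)) ≃
            (ZMod q × ZMod pn) :=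
          ⟨fun z => (Multiplicative.toAdd z.left, Multiplicative.toAdd z.right),
           fun z => ⟨ofAdd z.1, ofAdd z.2⟩, fun z => rfl, fun z => rfl⟩
        have hQcard : Nat.card (Multiplicative (ZMod q) ⋊[(theta q).comp χ]
            Multiplicative (ZMod pn)) = p ^ (s + (s-1)) := by
          rw [Nat.card_congr e, Nat.card_prod, Nat.card_zmod, Nat.card_zmod, hqdef, hpn,
            ← pow_add]
        have hdvd : σ.ker.index ∣ p ^ (s + (s-1)) := by
          rw [Subgroup.index_ker]
          exact (Subgroup.card_subgroup_dvd_card _).trans (dvd_of_eq hQcard)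
        obtain ⟨k, _, hk⟩ := (Nat.dvd_prime_pow hp).mp hdvd
        exact ⟨k, hk⟩
    · -- non-torsion case
      set z := Multiplicative.toAdd ((phi u hu w).right) with hzdef
      set n := z.natAbs with hn
      let c : Multiplicative ℤ →* Multiplicative (ZMod (p ^ n)) :=
        zpowersHom _ (ofAdd (1 : ZMod (p ^ n)))
      set σ := c.comp (SemidirectProduct.rightHom.comp (phi u hu)) with hσ
      refine ⟨σ.ker, MonoidHom.normal_ker σ, ?_, ?_⟩
      · rw [MonoidHom.mem_ker]
        intro hcon
        have hcval : σ w = ofAdd ((z : ZMod (p ^ n))) := by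
          rw [hσ]
          simp only [MonoidHom.comp_apply, SemidirectProduct.rightHom_eq_right]
          show (ofAdd (1 : ZMod (p ^ n))) ^ (Multiplicative.toAdd ((phi u hu w).right)) = _
          rw [← ofAdd_zsmul, zsmul_eq_mul, mul_one, ← hzdef]
        rw [hcval] at hcon
        have : ((z : ℤ) : ZMod (p ^ n)) = 0 := by simpa using hcon
        rw [ZMod.intCast_zmod_eq_zero_iff_dvd] at this
        have hle : ((p ^ n : ℕ) : ℤ) ≤ |z| := Int.le_of_dvd (abs_pos.mpr hz) ((dvd_abs _ _).mpr this)
        have hlt : (n : ℤ) < ((p ^ n : ℕ) : ℤ) := by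
          exact_mod_cast Nat.lt_pow_self (n := n) hp.one_lt
        rw [Int.abs_eq_natAbs, ← hn] at hle
        omega
      · have hdvd : σ.ker.index ∣ p ^ n := by
          rw [Subgroup.index_ker]
          have hc : Nat.card (Multiplicative (ZMod (p ^ n))) = p ^ n := by
            rw [Nat.card_congr (Multiplicative.toAdd (α := ZMod (p ^ n))), Nat.card_zmod]
          exact (Subgroup.card_subgroup_dvd_card _).trans (dvd_of_eq hc)
        obtain ⟨k, _, hk⟩ := (Nat.dvd_prime_pow hp).mp hdvd
        exact ⟨k, hk⟩
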